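/- Let p : X → B and p' : X' → B' be surjective maps of metric spaces such that every fiber preimage determines distances: d(b₁,b₂) = d(p⁻¹(b₁), p⁻¹(b₂)) = d_H(p⁻¹(b₁), p⁻¹(b₂)) for all b₁,b₂ ∈ B (and similarly for p'). Let f : X → X' be C''-Lipschitz with inverse g, and φ : B → B' a bijection with inverse ψ. Suppose there exist constants C, C' > 0 with d(φ(p(x)), p'(f(x))) < C for all x ∈ X and d(p(g(x')), ψ(p'(x'))) < C' for all x' ∈ X'. Then for every b ∈ B, the Hausdorff distance d_H(f(p⁻¹(b)), (p')⁻¹(φ(b))) ≤ max{C, C' · C''}. -/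

import Mathlib

open EMetric

/-- `p : X → B` and `p' : X' → B'` are distance respecting projections of metric spaces
(fiber-to-fiber infimum distance and Hausdorff distance both equal the base distance).
If `f : X → X'` is a `C''`-Lipschitz map with inverse `g`, `φ : B → B'` a bijection with
inverse `ψ`, and the diagrams commute up to bounded error (`edist (φ (p x)) (p' (f x)) < C`
and `edist (p (g x')) (ψ (p' x')) < C'`), then for every `b ∈ B` the Hausdorff distance
between `f(p⁻¹ b)` and `p'⁻¹(φ b)` is at most `max C (C' * C'')`. -/
theorem fiber_respecting_hausdorff_bound
    {X X' B B' : Type*} [MetricSpace X] [MetricSpace X'] [MetricSpace B] [MetricSpace B']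
    (p : X → B) (p' : X' → B')
    (hp : Function.Surjective p) (hp' : Function.Surjective p')
    (hd1 : ∀ b₁ b₂ : B, edist b₁ b₂ = ⨅ x ∈ p ⁻¹' {b₁}, ⨅ y ∈ p ⁻¹' {b₂}, edist x y)
    (hd2 : ∀ b₁ b₂ : B, edist b₁ b₂ = hausdorffEdist (p ⁻¹' {b₁}) (p ⁻¹' {b₂}))
    (hd1' : ∀ b₁ b₂ : B', edist b₁ b₂ = ⨅ x ∈ p' ⁻¹' {b₁}, ⨅ y ∈ p' ⁻¹' {b₂}, edist x y)
    (hd2' : ∀ b₁ b₂ : B', edist b₁ b₂ = hausdorffEdist (p' ⁻¹' {b₁}) (p' ⁻¹' {b₂}))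
    (C'' : NNReal) (f : X → X') (hf : LipschitzWith C'' f)
    (g : X' → X) (hgf : Function.LeftInverse g f) (hfg : Function.RightInverse g f)
    (φ : B → B') (ψ : B' → B) (hψφ : Function.LeftInverse ψ φ)
    (hφψ : Function.RightInverse ψ φ)
    (C C' : ENNReal) (hC : 0 < C) (hC' : 0 < C')
    (hb : ∀ x : X, edist (φ (p x)) (p' (f x)) < C)
    (hb' : ∀ x' : X', edist (p (g x')) (ψ (p' x')) < C') :
    ∀ b : B, hausdorffEdist (f '' (p ⁻¹' {b})) (p' ⁻¹' {φ b}) ≤ max C (C' * C'') := by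
  intro b
  apply hausdorffEdist_le_of_infEdist
  · rintro _ ⟨x, hx, rfl⟩
    simp only [Set.mem_preimage, Set.mem_singleton_iff] at hx
    have h1 : edist (φ b) (p' (f x)) < C := by rw [← hx]; exact hb x
    rw [hd2'] at h1
    have h2 : infEdist (f x) (p' ⁻¹' {φ b}) ≤ hausdorffEdist (p' ⁻¹' {p' (f x)}) (p' ⁻¹' {φ b}) :=
      infEdist_le_hausdorffEdist_of_mem rfl
    rw [show hausdorffEdist (p' ⁻¹' {p' (f x)}) (p' ⁻¹' {φ b}) = hausdorffEdist (p' ⁻¹' {φ b}) (p' ⁻¹' {p' (f x)}) from Metric.hausdorffEDist_comm] at h2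
    exact le_max_of_le_left (h2.trans h1.le)
  · intro x' hx'
    simp only [Set.mem_preimage, Set.mem_singleton_iff] at hx'
    have h1 : edist (p (g x')) b < C' := by
      have := hb' x'
      rwa [hx', hψφ b] at this
    rw [hd2] at h1
    have h2 : infEdist (g x') (p ⁻¹' {b}) < C' :=
      lt_of_le_of_lt (infEdist_le_hausdorffEdist_of_mem
        (show g x' ∈ p ⁻¹' {p (g x')} from rfl)) h1
    replace h2 : ∃ y ∈ p ⁻¹' {b}, edist (g x') y < C' := Metric.infEDist_lt_iff.mp h2
    obtain ⟨y, hy, hdy⟩ := h2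
    have h3 : edist x' (f y) ≤ C' * C'' := by
      calc edist x' (f y) = edist (f (g x')) (f y) := by rw [hfg x']
        _ ≤ C'' * edist (g x') y := hf.edist_le_mul _ _
        _ ≤ C'' * C' := mul_le_mul_right hdy.le _
        _ = C' * C'' := mul_comm _ _
    refine le_max_of_le_right ((infEdist_le_edist_of_mem ?_).trans h3)
    exact ⟨y, hy, rfl⟩
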